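/- Let μ be a probability measure on a sequence space with shift T, and let η be a T-stationary probability measure. Then η asymptotically dominates μ (i.e. η(E)=0 implies lim_{n→∞} μ(T^{-n}E)=0 for all measurable E) if and only if the restriction of μ to the tail σ-field ⋂_{n≥0} T^{-n}B is absolutely continuous with respect to the restriction of η to the tail σ-field. -/

import Mathlib

open MeasureTheory Filter

/-- The one-sided shift on a sequence space. -/
def seqShift {A : Type*} : (ℕ → A) → (ℕ → A) := fun x i => x (i + 1)

/-- The tail σ-field `⋂_{n≥0} T^{-n} F`. -/
def tailSigma (X : Type*) [m : MeasurableSpace X] (T : X → X) : MeasurableSpace X :=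
  ⨅ n : ℕ, m.comap (T^[n])

lemma tailSigma_le (X : Type*) [m : MeasurableSpace X] (T : X → X) :
    tailSigma X T ≤ m := by
  have h := iInf_le (fun n : ℕ => m.comap (T^[n])) 0
  simpa [tailSigma, MeasurableSpace.comap_id] using h

lemma measurable_seqShift {A : Type*} [MeasurableSpace A] :
    Measurable (seqShift (A := A)) :=
  measurable_pi_lambda _ fun i => measurable_pi_apply (i + 1)

lemma eta_iterate {A : Type*} [MeasurableSpace A] (η : Measure (ℕ → A))
    (hη : ∀ E : Set (ℕ → A), MeasurableSet E → η (seqShift ⁻¹' E) = η E) :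
    ∀ (n : ℕ) (E : Set (ℕ → A)), MeasurableSet E → η ((seqShift^[n]) ⁻¹' E) = η E := by
  intro n
  induction n with
  | zero => intro E _; simp
  | succ n ih =>
    intro E hE
    have h1 : (seqShift^[n+1]) ⁻¹' E = seqShift ⁻¹' ((seqShift^[n]) ⁻¹' E) := by
      rw [Function.iterate_succ, Set.preimage_comp]
    rw [h1, hη _ ((measurable_seqShift.iterate n) hE), ih E hE]

/-- A stationary probability `η` asymptotically dominates `μ` iff the restriction of `μ` to
the tail σ-field is absolutely continuous w.r.t. the restriction of `η` to the tail σ-field. -/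
theorem asympDominates_iff_tail_ac {A : Type*} [MeasurableSpace A]
    (μ η : Measure (ℕ → A)) [IsProbabilityMeasure μ] [IsProbabilityMeasure η]
    (hη : ∀ E : Set (ℕ → A), MeasurableSet E → η (seqShift ⁻¹' E) = η E) :
    (∀ E : Set (ℕ → A), MeasurableSet E → η E = 0 →
        Tendsto (fun n : ℕ => μ ((seqShift^[n]) ⁻¹' E)) atTop (nhds 0)) ↔
      μ.trim (tailSigma_le _ seqShift) ≪ η.trim (tailSigma_le _ seqShift) := by
  have hηn := eta_iterate η hη
  have hT : Measurable (seqShift (A := A)) := measurable_seqShift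
  constructor
  · -- dominance → AC on tail
    intro hdom
    refine Measure.AbsolutelyContinuous.mk ?_
    intro s hs hs0
    have hs' : ∀ n : ℕ, MeasurableSet[(inferInstance :
        MeasurableSpace (ℕ → A)).comap (seqShift^[n])] s :=
      fun n => (MeasurableSpace.measurableSet_iInf.mp hs) n
    choose E hEmeas hEeq using hs'
    have hηs : η s = 0 := by
      rw [← trim_measurableSet_eq (tailSigma_le _ seqShift) hs]; exact hs0
    have hEnull : ∀ n, η (E n) = 0 := fun n => by
      rw [← hηn n (E n) (hEmeas n), hEeq n]; exact hηs
    have hFmeas : MeasurableSet (⋃ n, E n) := MeasurableSet.iUnion hEmeas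
    have hFnull : η (⋃ n, E n) = 0 := measure_iUnion_null hEnull
    have htend := hdom _ hFmeas hFnull
    have hle : ∀ n : ℕ, μ s ≤ μ ((seqShift^[n]) ⁻¹' (⋃ n, E n)) := by
      intro n
      apply measure_mono
      rw [← hEeq n]
      exact Set.preimage_mono (Set.subset_iUnion E n)
    have hle0 : μ s ≤ 0 := ge_of_tendsto' htend hle
    rw [trim_measurableSet_eq (tailSigma_le _ seqShift) hs]
    exact le_antisymm hle0 (zero_le)
  · -- AC on tail → dominance
    intro hac E hE hE0
    set U0 : Set (ℕ → A) := ⋃ n, (seqShift^[n]) ⁻¹' E with hU0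
    have hU0meas : MeasurableSet U0 := MeasurableSet.iUnion fun n => (hT.iterate n) hE
    have hU0null : η U0 = 0 :=
      measure_iUnion_null fun n => by rw [hηn n E hE]; exact hE0
    set U : ℕ → Set (ℕ → A) := fun k => (seqShift^[k]) ⁻¹' U0 with hU
    have hUmeas : ∀ k, MeasurableSet (U k) := fun k => (hT.iterate k) hU0meas
    have hpre : seqShift ⁻¹' U0 ⊆ U0 := by
      rw [hU0, Set.preimage_iUnion]
      refine Set.iUnion_subset fun n => ?_
      have h1 : seqShift ⁻¹' ((seqShift^[n]) ⁻¹' E) = (seqShift^[n+1]) ⁻¹' E := by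
        rw [Function.iterate_succ, Set.preimage_comp]
      rw [h1]
      exact Set.subset_iUnion (fun n => (seqShift^[n]) ⁻¹' E) (n+1)
    have hUanti : Antitone U := by
      refine antitone_nat_of_succ_le fun k => ?_
      show (seqShift^[k+1]) ⁻¹' U0 ⊆ (seqShift^[k]) ⁻¹' U0
      rw [Function.iterate_succ', Set.preimage_comp]
      exact Set.preimage_mono hpre
    have hUshift : ∀ m k : ℕ, (seqShift^[m]) ⁻¹' (U k) = U (k + m) := by
      intro m k
      show (seqShift^[m]) ⁻¹' ((seqShift^[k]) ⁻¹' U0) = (seqShift^[k+m]) ⁻¹' U0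
      rw [Function.iterate_add, Set.preimage_comp]
    set G : Set (ℕ → A) := ⋂ k, U k with hG
    have hGmeas : MeasurableSet G := MeasurableSet.iInter hUmeas
    have hGshift : ∀ m : ℕ, (seqShift^[m]) ⁻¹' G = G := by
      intro m
      rw [hG, Set.preimage_iInter]
      simp_rw [hUshift m]
      apply Set.Subset.antisymm
      · exact Set.subset_iInter fun j =>
          (Set.iInter_subset (fun k => U (k + m)) j).trans (hUanti (Nat.le_add_right j m))
      · exact Set.subset_iInter fun j => Set.iInter_subset U (j + m)
    have hGtail : MeasurableSet[tailSigma (ℕ → A) seqShift] G := by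
      rw [tailSigma, MeasurableSpace.measurableSet_iInf]
      exact fun m => ⟨G, hGmeas, hGshift m⟩
    have hGU0 : G ⊆ U0 := by
      have : G ⊆ U 0 := Set.iInter_subset U 0
      simpa [hU] using this
    have hηG : η G = 0 := le_antisymm (hU0null ▸ measure_mono hGU0) (zero_le)
    have hηtrimG : η.trim (tailSigma_le _ seqShift) G = 0 := by
      rw [trim_measurableSet_eq (tailSigma_le _ seqShift) hGtail]; exact hηG
    have hμG : μ G = 0 := by
      have := hac hηtrimG
      rwa [trim_measurableSet_eq (tailSigma_le _ seqShift) hGtail] at this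
    have htendU : Tendsto (fun k => μ (U k)) atTop (nhds 0) := by
      have h := tendsto_measure_iInter_atTop (μ := μ) (fun k => (hUmeas k).nullMeasurableSet)
        hUanti ⟨0, measure_ne_top μ _⟩
      rwa [← hG, hμG] at h
    refine tendsto_of_tendsto_of_tendsto_of_le_of_le tendsto_const_nhds htendU
      (fun n => zero_le) (fun n => measure_mono ?_)
    exact Set.preimage_mono (Set.subset_iUnion (fun n => (seqShift^[n]) ⁻¹' E) 0)
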